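/- Let W₀ and W₁ be complex vector spaces with dim W₀ = dim W₁ = k ≤ 4, and let x : W₀ → W₁ and a₁, a₂ : W₁ → W₀ be linear maps such that a₁∘x∘a₂ = a₂∘x∘a₁, ker(a₁∘x) ∩ ker(a₂∘x) ⊆ ker x, and both x∘a₁ and x∘a₂ are nilpotent endomorphisms of W₁. Then dim(ker x) ≤ dim(ker(x∘a₁) ∩ ker(x∘a₂)). -/

import Mathlib

open Module LinearMap

section aux
variable {V : Type*} [AddCommGroup V] [Module ℂ V] [FiniteDimensional ℂ V]

/-- A nilpotent endomorphism of a nonzero space kills a nonzero vector. -/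
lemma aux_nilp_ker {f : V →ₗ[ℂ] V} (hf : IsNilpotent f) (hV : Module.finrank ℂ V ≠ 0) :
    ∃ v : V, v ≠ 0 ∧ f v = 0 := by
  by_contra h
  push_neg at h
  have hker : LinearMap.ker f = ⊥ := by
    rw [LinearMap.ker_eq_bot']
    intro v hv
    by_contra hv0
    exact (h v hv0) hv
  have hinj : Function.Injective f := LinearMap.ker_eq_bot.mp hker
  obtain ⟨n, hn⟩ := hf
  have hinjn : ∀ m : ℕ, Function.Injective (f ^ m) := by
    intro m
    induction m with
    | zero => simpa [Module.End.one_eq_id] using Function.injective_id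
    | succ m ih =>
      rw [pow_succ, Module.End.mul_eq_comp, LinearMap.coe_comp]
      exact ih.comp hinj
  have : Nontrivial V := by
    rcases Module.finrank_pos_iff (R := ℂ) (M := V) |>.mp (Nat.pos_of_ne_zero hV) with h
    exact h
  obtain ⟨v, hv⟩ := exists_ne (0 : V)
  apply hv
  apply hinjn n
  simp [hn]

/-- Commuting nilpotent endomorphisms have a common nonzero kernel vector. -/
lemma aux_common_ker {f g : V →ₗ[ℂ] V} (hf : IsNilpotent f) (hg : IsNilpotent g)
    (hfg : ∀ v, f (g v) = g (f v)) (hV : Module.finrank ℂ V ≠ 0) :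
    ∃ v : V, v ≠ 0 ∧ f v = 0 ∧ g v = 0 := by
  have hmap : Set.MapsTo g (LinearMap.ker f) (LinearMap.ker f) := by
    intro v hv
    simp only [SetLike.mem_coe, LinearMap.mem_ker] at *
    rw [hfg, hv, map_zero]
  have hgnil : IsNilpotent (g.restrict hmap) := Module.End.isNilpotent.restrict hmap hg
  have hne : Module.finrank ℂ (LinearMap.ker f) ≠ 0 := by
    obtain ⟨v, hv, hfv⟩ := aux_nilp_ker hf hV
    intro h0
    rw [Submodule.finrank_eq_zero] at h0
    have : v ∈ LinearMap.ker f := hfv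
    rw [h0] at this
    exact hv (by simpa using this)
  obtain ⟨w, hw, hgw⟩ := aux_nilp_ker hgnil hne
  refine ⟨(w : V), by simpa using hw, w.2, ?_⟩
  have := congrArg (Subtype.val) hgw
  exact this

/-- An eigenvalue of a nilpotent endomorphism is zero. -/
lemma aux_eigen_nilp {f : V →ₗ[ℂ] V} (hf : IsNilpotent f) {v : V} {c : ℂ}
    (h : f v = c • v) (hv : v ≠ 0) : c = 0 := by
  obtain ⟨n, hn⟩ := hf
  have key : ∀ m : ℕ, (f ^ m) v = c ^ m • v := by
    intro m
    induction m with
    | zero => simp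
    | succ m ih =>
      rw [pow_succ, Module.End.mul_apply, h, map_smul, ih, smul_smul, pow_succ]
      ring_nf
  have h0 := key n
  rw [hn] at h0
  simp only [LinearMap.zero_apply] at h0
  have : c ^ n = 0 := by
    rcases smul_eq_zero.mp h0.symm with h | h
    · exact h
    · exact absurd h hv
  exact pow_eq_zero_iff'.mp this |>.1

/-- A nilpotent endomorphism kills any invariant subspace of dimension at most 1. -/
lemma aux_inv_line {f : V →ₗ[ℂ] V} (hf : IsNilpotent f) {U : Submodule ℂ V}
    (hU : U.map f ≤ U) (h1 : Module.finrank ℂ U ≤ 1) : ∀ u ∈ U, f u = 0 := by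
  intro u hu
  obtain ⟨v, hvgen⟩ := finrank_le_one_iff.mp h1
  rcases eq_or_ne (v : V) 0 with hv0 | hv0
  · -- then U = 0
    obtain ⟨c, hc⟩ := hvgen ⟨u, hu⟩
    have : u = 0 := by
      have := congrArg (Subtype.val) hc
      simp [hv0] at this
      exact this.symm
    simp [this]
  · have hfv : f (v : V) ∈ U := hU ⟨v, v.2, rfl⟩
    obtain ⟨c, hc⟩ := hvgen ⟨f (v : V), hfv⟩
    have hc' : f (v : V) = c • (v : V) := by
      have := congrArg (Subtype.val) hc
      simpa using this.symm
    have hc0 : c = 0 := aux_eigen_nilp hf hc' hv0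
    obtain ⟨d, hd⟩ := hvgen ⟨u, hu⟩
    have hd' : u = d • (v : V) := by
      have := congrArg (Subtype.val) hd
      simpa using this.symm
    rw [hd', map_smul, hc', hc0, zero_smul, smul_zero]

/-- The image of an invariant subspace of dimension at most 2 under a nilpotent
endomorphism has dimension at most 1. -/
lemma aux_map_rank {f : V →ₗ[ℂ] V} (hf : IsNilpotent f) {U : Submodule ℂ V}
    (hU : U.map f ≤ U) (h2 : Module.finrank ℂ U ≤ 2) : Module.finrank ℂ (U.map f) ≤ 1 := by
  by_contra h
  push_neg at h
  have hle : Module.finrank ℂ U ≤ Module.finrank ℂ (U.map f) := le_trans h2 h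
  have heq : U.map f = U := Submodule.eq_of_le_of_finrank_le hU hle
  have hiter : ∀ n : ℕ, U.map (f ^ n) = U := by
    intro n
    induction n with
    | zero => simp [Module.End.one_eq_id]
    | succ m ih =>
      rw [pow_succ, Module.End.mul_eq_comp, Submodule.map_comp, heq, ih]
  obtain ⟨n, hn⟩ := hf
  have hbot : U = ⊥ := by
    have := hiter n
    rw [hn] at this
    simpa using this.symm
  rw [hbot] at h
  rw [Submodule.map_bot] at h
  simp [finrank_bot] at h

end aux
open Module LinearMap

/-- Surjectivity from a dimension count. -/
lemma aux_surj {W C : Type*} [AddCommGroup W] [Module ℂ W] [FiniteDimensional ℂ W]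
    [AddCommGroup C] [Module ℂ C] [FiniteDimensional ℂ C]
    (G : W →ₗ[ℂ] C) (h : Module.finrank ℂ C + Module.finrank ℂ (LinearMap.ker G)
      ≤ Module.finrank ℂ W) :
    Function.Surjective G := by
  have hrn := G.finrank_range_add_finrank_ker
  have hle : Module.finrank ℂ (LinearMap.range G) ≤ Module.finrank ℂ C :=
    (LinearMap.range G).finrank_le
  have heq : Module.finrank ℂ (LinearMap.range G) = Module.finrank ℂ C := by omega
  have : LinearMap.range G = ⊤ := Submodule.eq_top_of_finrank_eq heq
  exact LinearMap.range_eq_top.mp this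

/-- Core contradiction for the case `rank x = 2`, `k = 4`. -/
lemma caseB_core {W₀ W₁ : Type*} [AddCommGroup W₀] [Module ℂ W₀]
    [AddCommGroup W₁] [Module ℂ W₁] [FiniteDimensional ℂ W₁]
    (a₁ a₂ : W₁ →ₗ[ℂ] W₀) (b₁ b₂ : W₁ →ₗ[ℂ] W₁)
    (l₁ l₂ m₁ m₂ : W₁ →ₗ[ℂ] ℂ) (β₁ β₂ : ℂ) (n₀ n₁ : W₁)
    (hd₁ : ∀ w, b₁ w = l₁ w • n₀ + m₁ w • n₁)
    (hd₂ : ∀ w, b₂ w = l₂ w • n₀ + m₂ w • n₁)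
    (hrel : ∀ w, β₁ * l₂ w = β₂ * l₁ w)
    (hβ₂ : β₂ ≠ 0)
    (hcomm' : ∀ w, a₁ (b₂ w) = a₂ (b₁ w))
    (hker' : a₁ n₁ = 0 → a₂ n₁ = 0 → n₁ = 0)
    (hn₁ : n₁ ≠ 0)
    (hW : 4 ≤ Module.finrank ℂ W₁)
    (hK : Module.finrank ℂ ↥(LinearMap.ker b₁ ⊓ LinearMap.ker b₂) ≤ 1) : False := by
  set G : W₁ →ₗ[ℂ] ℂ × ℂ × ℂ := l₂.prod (m₁.prod m₂) with hG
  have hkerG : LinearMap.ker G ≤ LinearMap.ker b₁ ⊓ LinearMap.ker b₂ := by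
    intro w hw
    simp only [hG, LinearMap.mem_ker, LinearMap.prod_apply, Function.prod_apply, Prod.mk_eq_zero] at hw
    obtain ⟨hl2, hm1, hm2⟩ := hw
    have hl1 : l₁ w = 0 := by
      have := hrel w
      rw [hl2, mul_zero] at this
      exact (mul_eq_zero.mp this.symm).resolve_left hβ₂
    constructor <;> simp [LinearMap.mem_ker, hd₁, hd₂, hl1, hl2, hm1, hm2]
  have hfin : Module.finrank ℂ (LinearMap.ker G) ≤ 1 :=
    le_trans (Submodule.finrank_mono hkerG) hK
  have hsurj : Function.Surjective G := by
    apply aux_surj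
    have : Module.finrank ℂ (ℂ × ℂ × ℂ) = 3 := by simp
    omega
  have key : ∀ c₂ d₁ d₂ : ℂ, ∃ w, l₂ w = c₂ ∧ m₁ w = d₁ ∧ m₂ w = d₂ := by
    intro c₂ d₁ d₂
    obtain ⟨w, hw⟩ := hsurj (c₂, d₁, d₂)
    simp only [hG, LinearMap.prod_apply, Function.prod_apply, Prod.mk.injEq] at hw
    exact ⟨w, hw.1, hw.2.1, hw.2.2⟩
  have ha₁ : a₁ n₁ = 0 := by
    obtain ⟨w, hl2, hm1, hm2⟩ := key 0 0 1
    have hl1 : l₁ w = 0 := by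
      have := hrel w
      rw [hl2, mul_zero] at this
      exact (mul_eq_zero.mp this.symm).resolve_left hβ₂
    have hb₂w : b₂ w = n₁ := by rw [hd₂, hl2, hm2]; simp
    have hb₁w : b₁ w = 0 := by rw [hd₁, hl1, hm1]; simp
    have := hcomm' w
    rw [hb₂w, hb₁w, map_zero] at this
    exact this
  have ha₂ : a₂ n₁ = 0 := by
    obtain ⟨w, hl2, hm1, hm2⟩ := key 0 1 0
    have hl1 : l₁ w = 0 := by
      have := hrel w
      rw [hl2, mul_zero] at this
      exact (mul_eq_zero.mp this.symm).resolve_left hβ₂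
    have hb₂w : b₂ w = 0 := by rw [hd₂, hl2, hm2]; simp
    have hb₁w : b₁ w = n₁ := by rw [hd₁, hl1, hm1]; simp
    have := hcomm' w
    rw [hb₂w, hb₁w, map_zero] at this
    exact this.symm
  exact hn₁ (hker' ha₁ ha₂)

/-- Let `W₀, W₁` be complex vector spaces with `dim W₀ = dim W₁ = k ≤ 4`, and
`x : W₀ → W₁`, `a₁, a₂ : W₁ → W₀` linear maps with `a₁∘x∘a₂ = a₂∘x∘a₁`,
`ker(a₁∘x) ∩ ker(a₂∘x) ⊆ ker x`, and `x∘a₁`, `x∘a₂` nilpotent. Then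
`dim (ker x) ≤ dim (ker(x∘a₁) ∩ ker(x∘a₂))`. -/
theorem stmt10 {W₀ W₁ : Type*} (k : ℕ) (hk : k ≤ 4)
    [AddCommGroup W₀] [Module ℂ W₀] [FiniteDimensional ℂ W₀]
    [AddCommGroup W₁] [Module ℂ W₁] [FiniteDimensional ℂ W₁]
    (hdim₀ : Module.finrank ℂ W₀ = k) (hdim₁ : Module.finrank ℂ W₁ = k)
    (x : W₀ →ₗ[ℂ] W₁) (a₁ a₂ : W₁ →ₗ[ℂ] W₀)
    (hcomm : a₁ ∘ₗ x ∘ₗ a₂ = a₂ ∘ₗ x ∘ₗ a₁)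
    (hker : LinearMap.ker (a₁ ∘ₗ x) ⊓ LinearMap.ker (a₂ ∘ₗ x) ≤ LinearMap.ker x)
    (hn₁ : IsNilpotent (x ∘ₗ a₁))
    (hn₂ : IsNilpotent (x ∘ₗ a₂)) :
    Module.finrank ℂ ↥(LinearMap.ker x)
      ≤ Module.finrank ℂ ↥(LinearMap.ker (x ∘ₗ a₁) ⊓ LinearMap.ker (x ∘ₗ a₂)) := by
  classical
  set N : Submodule ℂ W₁ := LinearMap.range x with hN
  set K : Submodule ℂ W₁ := LinearMap.ker (x ∘ₗ a₁) ⊓ LinearMap.ker (x ∘ₗ a₂) with hK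
  -- pointwise commutation
  have hc : ∀ w, a₁ (x (a₂ w)) = a₂ (x (a₁ w)) := by
    intro w
    have := LinearMap.congr_fun hcomm w
    simpa using this
  have hbcomm : ∀ w, (x ∘ₗ a₁) ((x ∘ₗ a₂) w) = (x ∘ₗ a₂) ((x ∘ₗ a₁) w) := by
    intro w
    simp only [LinearMap.comp_apply]
    rw [hc]
  -- pointwise stability
  have hkerN : ∀ n ∈ N, a₁ n = 0 → a₂ n = 0 → n = 0 := by
    rintro n ⟨v, rfl⟩ h1 h2
    have hv : v ∈ LinearMap.ker (a₁ ∘ₗ x) ⊓ LinearMap.ker (a₂ ∘ₗ x) := by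
      constructor <;> simp [LinearMap.mem_ker, h1, h2]
    simpa using hker hv
  have hrange₁ : LinearMap.range (x ∘ₗ a₁) ≤ N := LinearMap.range_comp_le_range a₁ x
  have hrange₂ : LinearMap.range (x ∘ₗ a₂) ≤ N := LinearMap.range_comp_le_range a₂ x
  have hmem₁ : ∀ w, (x ∘ₗ a₁) w ∈ N := fun w => hrange₁ ⟨w, rfl⟩
  have hmem₂ : ∀ w, (x ∘ₗ a₂) w ∈ N := fun w => hrange₂ ⟨w, rfl⟩
  have hmap₁ : N.map (x ∘ₗ a₁) ≤ N := by
    rintro y ⟨u, -, rfl⟩; exact hmem₁ u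
  have hmap₂ : N.map (x ∘ₗ a₂) ≤ N := by
    rintro y ⟨u, -, rfl⟩; exact hmem₂ u
  have hrnx : Module.finrank ℂ ↥N + Module.finrank ℂ ↥(LinearMap.ker x) = k := by
    rw [← hdim₀]; exact x.finrank_range_add_finrank_ker
  have hrk : Module.finrank ℂ ↥N ≤ k := by
    rw [← hdim₁]; exact N.finrank_le
  set r : ℕ := Module.finrank ℂ ↥N with hr
  suffices hmain : k - r ≤ Module.finrank ℂ ↥K by omega
  by_cases hkr : k ≤ r
  · omega
  -- now r < k
  by_cases hr0 : r = 0
  · -- x = 0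
    have hxbot : x = 0 := by
      rw [← LinearMap.range_eq_bot, ← hN, ← Submodule.finrank_eq_zero, ← hr]
      exact hr0
    have hKtop : K = ⊤ := by
      rw [hK, hxbot]
      simp
    rw [hKtop]
    have : Module.finrank ℂ (⊤ : Submodule ℂ W₁) = k := by
      rw [finrank_top]; exact hdim₁
    omega
  by_cases hk1 : k = r + 1
  · -- need 1 ≤ finrank K : common kernel of commuting nilpotents
    obtain ⟨v, hv0, h1, h2⟩ := aux_common_ker hn₁ hn₂ hbcomm (by omega : Module.finrank ℂ W₁ ≠ 0)
    have hvK : v ∈ K := by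
      constructor <;> simp [LinearMap.mem_ker, h1, h2]
    have : K ≠ ⊥ := by
      intro hbot
      rw [hbot] at hvK
      exact hv0 (by simpa using hvK)
    have : Module.finrank ℂ ↥K ≠ 0 := fun h0 => this (Submodule.finrank_eq_zero.mp h0)
    omega
  by_cases hr1 : r = 1
  · -- Argument A
    obtain ⟨v, hv0, hvgen⟩ := (finrank_eq_one_iff' (K := ℂ) (V := ↥N)).mp hr1.symm.symm
    set n : W₁ := (v : W₁) with hn
    have hn0 : n ≠ 0 := fun h => hv0 (by simpa [hn] using Subtype.ext h)
    have hnN : n ∈ N := v.2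
    have hgen : ∀ y ∈ N, ∃ c : ℂ, y = c • n := by
      intro y hy
      obtain ⟨c, hc'⟩ := hvgen ⟨y, hy⟩
      exact ⟨c, by simpa [hn] using (congrArg Subtype.val hc').symm⟩
    have claim : LinearMap.ker (x ∘ₗ a₁) ≤ LinearMap.ker (x ∘ₗ a₂) ∨
        LinearMap.ker (x ∘ₗ a₂) ≤ LinearMap.ker (x ∘ₗ a₁) := by
      by_contra hcl
      push_neg at hcl
      obtain ⟨h1, h2⟩ := hcl
      rw [SetLike.not_le_iff_exists] at h1 h2
      obtain ⟨w₁, hw₁k, hw₁n⟩ := h1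
      obtain ⟨w₂, hw₂k, hw₂n⟩ := h2
      have hb₁w₁ : x (a₁ w₁) = 0 := by simpa using hw₁k
      have hb₂w₂ : x (a₂ w₂) = 0 := by simpa using hw₂k
      have hb₂w₁ : x (a₂ w₁) ≠ 0 := fun h => hw₁n (LinearMap.mem_ker.mpr (by simpa using h))
      have hb₁w₂ : x (a₁ w₂) ≠ 0 := fun h => hw₂n (LinearMap.mem_ker.mpr (by simpa using h))
      -- a₁ n = 0
      obtain ⟨c, hcn⟩ := hgen (x (a₂ w₁)) ⟨a₂ w₁, rfl⟩
      have hcne : c ≠ 0 := by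
        intro h0
        rw [h0, zero_smul] at hcn
        exact hb₂w₁ hcn
      have ha₁n : a₁ n = 0 := by
        have h := hc w₁
        rw [hcn, hb₁w₁, map_zero, map_smul] at h
        exact (smul_eq_zero.mp h).resolve_left hcne
      -- a₂ n = 0
      obtain ⟨d, hdn⟩ := hgen (x (a₁ w₂)) ⟨a₁ w₂, rfl⟩
      have hdne : d ≠ 0 := by
        intro h0
        rw [h0, zero_smul] at hdn
        exact hb₁w₂ hdn
      have ha₂n : a₂ n = 0 := by
        have h := (hc w₂).symm
        rw [hdn, hb₂w₂, map_zero, map_smul] at h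
        exact (smul_eq_zero.mp h).resolve_left hdne
      exact hn0 (hkerN n hnN ha₁n ha₂n)
    have hrn₁ : Module.finrank ℂ ↥(LinearMap.range (x ∘ₗ a₁))
        + Module.finrank ℂ ↥(LinearMap.ker (x ∘ₗ a₁)) = k := by
      rw [← hdim₁]; exact (x ∘ₗ a₁).finrank_range_add_finrank_ker
    have hrn₂ : Module.finrank ℂ ↥(LinearMap.range (x ∘ₗ a₂))
        + Module.finrank ℂ ↥(LinearMap.ker (x ∘ₗ a₂)) = k := by
      rw [← hdim₁]; exact (x ∘ₗ a₂).finrank_range_add_finrank_ker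
    have hran₁ : Module.finrank ℂ ↥(LinearMap.range (x ∘ₗ a₁)) ≤ r :=
      Submodule.finrank_mono hrange₁
    have hran₂ : Module.finrank ℂ ↥(LinearMap.range (x ∘ₗ a₂)) ≤ r :=
      Submodule.finrank_mono hrange₂
    rcases claim with hle | hle
    · have hKeq : K = LinearMap.ker (x ∘ₗ a₁) := inf_eq_left.mpr hle
      rw [hKeq]
      omega
    · have hKeq : K = LinearMap.ker (x ∘ₗ a₂) := inf_eq_right.mpr hle
      rw [hKeq]
      omega
  · -- Argument B : r = 2, k = 4
    have hr2 : r = 2 := by omega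
    have hk4 : k = 4 := by omega
    have hfinN : Module.finrank ℂ ↥N = 2 := by omega
    have hrank₁ : Module.finrank ℂ ↥(N.map (x ∘ₗ a₁)) ≤ 1 :=
      aux_map_rank hn₁ hmap₁ (by omega)
    have hrank₂ : Module.finrank ℂ ↥(N.map (x ∘ₗ a₂)) ≤ 1 :=
      aux_map_rank hn₂ hmap₂ (by omega)
    have hb11 : ∀ u ∈ N.map (x ∘ₗ a₁), (x ∘ₗ a₁) u = 0 :=
      aux_inv_line hn₁ (Submodule.map_mono hmap₁) hrank₁
    have hb22 : ∀ u ∈ N.map (x ∘ₗ a₂), (x ∘ₗ a₂) u = 0 :=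
      aux_inv_line hn₂ (Submodule.map_mono hmap₂) hrank₂
    have hinv12 : (N.map (x ∘ₗ a₂)).map (x ∘ₗ a₁) ≤ N.map (x ∘ₗ a₂) := by
      rintro y ⟨u, ⟨n', hn', rfl⟩, rfl⟩
      exact ⟨(x ∘ₗ a₁) n', hmem₁ n', (hbcomm n').symm⟩
    have hinv21 : (N.map (x ∘ₗ a₁)).map (x ∘ₗ a₂) ≤ N.map (x ∘ₗ a₁) := by
      rintro y ⟨u, ⟨n', hn', rfl⟩, rfl⟩
      exact ⟨(x ∘ₗ a₂) n', hmem₂ n', hbcomm n'⟩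
    have hb12 : ∀ u ∈ N.map (x ∘ₗ a₂), (x ∘ₗ a₁) u = 0 :=
      aux_inv_line hn₁ hinv12 hrank₂
    have hb21 : ∀ u ∈ N.map (x ∘ₗ a₁), (x ∘ₗ a₂) u = 0 :=
      aux_inv_line hn₂ hinv21 hrank₁
    set M : Submodule ℂ W₁ := N.map (x ∘ₗ a₁) ⊔ N.map (x ∘ₗ a₂) with hM
    have hbM : ∀ u ∈ M, (x ∘ₗ a₁) u = 0 ∧ (x ∘ₗ a₂) u = 0 := by
      intro u hu
      rw [hM, Submodule.mem_sup] at hu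
      obtain ⟨y, hy, z, hz, rfl⟩ := hu
      constructor
      · rw [map_add, hb11 y hy, hb12 z hz, add_zero]
      · rw [map_add, hb21 y hy, hb22 z hz, add_zero]
    have hM_N : M ≤ N := sup_le hmap₁ hmap₂
    have hMrank : Module.finrank ℂ ↥M ≤ 1 := by
      by_contra hcon
      push_neg at hcon
      have hMfin : Module.finrank ℂ ↥N ≤ Module.finrank ℂ ↥M := by omega
      have heq : M = N := Submodule.eq_of_le_of_finrank_le hM_N hMfin
      have hbot₁ : N.map (x ∘ₗ a₁) = ⊥ := by
        rw [eq_bot_iff]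
        rintro y ⟨n', hn', rfl⟩
        rw [← heq] at hn'
        simp [(hbM n' hn').1]
      have hbot₂ : N.map (x ∘ₗ a₂) = ⊥ := by
        rw [eq_bot_iff]
        rintro y ⟨n', hn', rfl⟩
        rw [← heq] at hn'
        simp [(hbM n' hn').2]
      have : M = ⊥ := by rw [hM, hbot₁, hbot₂, sup_bot_eq]
      rw [this] at hcon
      simp [finrank_bot] at hcon
    by_cases hM0 : Module.finrank ℂ ↥M = 0
    · have hMbot : M = ⊥ := Submodule.finrank_eq_zero.mp hM0
      have hNK : N ≤ K := by
        intro n' hn'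
        have h1 : (x ∘ₗ a₁) n' = 0 := by
          have : (x ∘ₗ a₁) n' ∈ M := hM ▸ Submodule.mem_sup_left ⟨n', hn', rfl⟩
          rw [hMbot] at this
          simpa using this
        have h2 : (x ∘ₗ a₂) n' = 0 := by
          have : (x ∘ₗ a₂) n' ∈ M := hM ▸ Submodule.mem_sup_right ⟨n', hn', rfl⟩
          rw [hMbot] at this
          simpa using this
        exact ⟨LinearMap.mem_ker.mpr h1, LinearMap.mem_ker.mpr h2⟩
      have h2K := Submodule.finrank_mono hNK
      omega
    have hM1 : Module.finrank ℂ ↥M = 1 := by omega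
    -- choose the generator n₁ of M
    obtain ⟨v₁, hv₁0, hv₁gen⟩ := (finrank_eq_one_iff' (K := ℂ) (V := ↥M)).mp hM1
    set n₁ : W₁ := (v₁ : W₁) with hn₁def
    have hn₁0 : n₁ ≠ 0 := fun h => hv₁0 (by simpa [hn₁def] using Subtype.ext h)
    have hn₁M : n₁ ∈ M := v₁.2
    have hn₁N : n₁ ∈ N := hM_N hn₁M
    have hgenM : ∀ y ∈ M, ∃ c : ℂ, y = c • n₁ := by
      intro y hy
      obtain ⟨c, hc'⟩ := hv₁gen ⟨y, hy⟩
      exact ⟨c, by simpa [hn₁def] using (congrArg Subtype.val hc').symm⟩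
    obtain ⟨hbn₁₁, hbn₁₂⟩ := hbM n₁ hn₁M
    -- suppose for contradiction that dim K ≤ 1
    by_contra hlt
    push_neg at hlt
    have hK1 : Module.finrank ℂ ↥K ≤ 1 := by omega
    -- choose n₀ in N not in M
    have hMneN : M ≠ N := by
      intro h
      rw [h] at hM1
      omega
    obtain ⟨n₀, hn₀N, hn₀M⟩ := SetLike.exists_of_lt (lt_of_le_of_ne hM_N hMneN)
    have hind : ∀ s t : ℂ, s • n₀ + t • n₁ = 0 → s = 0 ∧ t = 0 := by
      intro s t hst
      by_cases hs : s = 0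
      · refine ⟨hs, ?_⟩
        rw [hs, zero_smul, zero_add] at hst
        exact (smul_eq_zero.mp hst).resolve_right hn₁0
      · exfalso
        apply hn₀M
        have h1 : s • n₀ = -(t • n₁) := add_eq_zero_iff_eq_neg.mp hst
        have h3 : n₀ = -(s⁻¹ • (t • n₁)) := by
          rw [← smul_neg, ← h1, smul_smul, inv_mul_cancel₀ hs, one_smul]
        rw [h3]
        exact M.neg_mem (M.smul_mem _ (M.smul_mem _ hn₁M))
    set vn₀ : ↥N := ⟨n₀, hn₀N⟩ with hvn₀
    set vn₁ : ↥N := ⟨n₁, hn₁N⟩ with hvn₁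
    have hli : LinearIndependent ℂ ![vn₀, vn₁] := by
      rw [LinearIndependent.pair_iff]
      intro s t h
      apply hind s t
      have := congrArg (Subtype.val : ↥N → W₁) h
      simpa [hvn₀, hvn₁] using this
    have hcard : Fintype.card (Fin 2) = Module.finrank ℂ ↥N := by
      rw [Fintype.card_fin, hfinN]
    set Bas : Basis (Fin 2) ℂ ↥N := basisOfLinearIndependentOfCardEqFinrank hli hcard with hBasdef
    have hBas : ⇑Bas = ![vn₀, vn₁] := coe_basisOfLinearIndependentOfCardEqFinrank hli hcard
    have hBas0 : Bas 0 = vn₀ := by rw [hBas]; rfl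
    have hBas1 : Bas 1 = vn₁ := by rw [hBas]; rfl
    have hdecomp : ∀ u : ↥N, (u : W₁) = (Bas.repr u 0) • n₀ + (Bas.repr u 1) • n₁ := by
      intro u
      have hsum := Bas.sum_repr u
      rw [Fin.sum_univ_two, hBas0, hBas1] at hsum
      have := congrArg (Subtype.val : ↥N → W₁) hsum
      simpa [hvn₀, hvn₁] using this.symm
    set bN₁ : W₁ →ₗ[ℂ] ↥N := LinearMap.codRestrict N (x ∘ₗ a₁) hmem₁ with hbN₁
    set bN₂ : W₁ →ₗ[ℂ] ↥N := LinearMap.codRestrict N (x ∘ₗ a₂) hmem₂ with hbN₂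
    set l₁ : W₁ →ₗ[ℂ] ℂ := (Bas.coord 0) ∘ₗ bN₁ with hl₁
    set m₁ : W₁ →ₗ[ℂ] ℂ := (Bas.coord 1) ∘ₗ bN₁ with hm₁
    set l₂ : W₁ →ₗ[ℂ] ℂ := (Bas.coord 0) ∘ₗ bN₂ with hl₂
    set m₂ : W₁ →ₗ[ℂ] ℂ := (Bas.coord 1) ∘ₗ bN₂ with hm₂
    have hd₁ : ∀ w, (x ∘ₗ a₁) w = l₁ w • n₀ + m₁ w • n₁ := by
      intro w
      have := hdecomp (bN₁ w)
      simpa [hl₁, hm₁, hbN₁, Basis.coord_apply, LinearMap.codRestrict_apply] using this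
    have hd₂ : ∀ w, (x ∘ₗ a₂) w = l₂ w • n₀ + m₂ w • n₁ := by
      intro w
      have := hdecomp (bN₂ w)
      simpa [hl₂, hm₂, hbN₂, Basis.coord_apply, LinearMap.codRestrict_apply] using this
    -- values at n₀
    have hbn₀M₁ : (x ∘ₗ a₁) n₀ ∈ M := hM ▸ Submodule.mem_sup_left ⟨n₀, hn₀N, rfl⟩
    have hbn₀M₂ : (x ∘ₗ a₂) n₀ ∈ M := hM ▸ Submodule.mem_sup_right ⟨n₀, hn₀N, rfl⟩
    obtain ⟨c₁, hc₁⟩ := hgenM _ hbn₀M₁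
    obtain ⟨c₂, hc₂⟩ := hgenM _ hbn₀M₂
    have hl₁n₀ : l₁ n₀ = 0 := by
      have h := hd₁ n₀
      rw [hc₁] at h
      have : l₁ n₀ • n₀ + (m₁ n₀ - c₁) • n₁ = 0 := by
        rw [sub_smul, h]; abel
      exact (hind _ _ this).1
    have hl₂n₀ : l₂ n₀ = 0 := by
      have h := hd₂ n₀
      rw [hc₂] at h
      have : l₂ n₀ • n₀ + (m₂ n₀ - c₂) • n₁ = 0 := by
        rw [sub_smul, h]; abel
      exact (hind _ _ this).1
    have hbn₀₁ : (x ∘ₗ a₁) n₀ = m₁ n₀ • n₁ := by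
      rw [hd₁ n₀, hl₁n₀, zero_smul, zero_add]
    have hbn₀₂ : (x ∘ₗ a₂) n₀ = m₂ n₀ • n₁ := by
      rw [hd₂ n₀, hl₂n₀, zero_smul, zero_add]
    set β₁ : ℂ := m₁ n₀ with hβ₁def
    set β₂ : ℂ := m₂ n₀ with hβ₂def
    have hrel : ∀ w, β₁ * l₂ w = β₂ * l₁ w := by
      intro w
      have h := hbcomm w
      rw [hd₂ w, hd₁ w, map_add, map_add, map_smul, map_smul, map_smul, map_smul,
        hbn₀₁, hbn₀₂, hbn₁₁, hbn₁₂, smul_zero, smul_zero, add_zero, add_zero,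
        smul_smul, smul_smul] at h
      have h0 : (l₂ w * β₁ - l₁ w * β₂) • n₁ = 0 := by
        rw [sub_smul, h, sub_self]
      have h1 := (smul_eq_zero.mp h0).resolve_right hn₁0
      have h2 := sub_eq_zero.mp h1
      rw [mul_comm β₁, mul_comm β₂]
      exact h2
    have hβor : β₁ ≠ 0 ∨ β₂ ≠ 0 := by
      by_contra hno
      push_neg at hno
      obtain ⟨hb1, hb2⟩ := hno
      have hb₁N : ∀ n' ∈ N, (x ∘ₗ a₁) n' = 0 := by
        intro n' hn'
        have hdc := hdecomp ⟨n', hn'⟩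
        simp only [Submodule.coe_mk] at hdc
        rw [hdc, map_add, map_smul, map_smul, hbn₀₁, hbn₁₁, hb1, zero_smul,
          smul_zero, smul_zero, add_zero]
      have hb₂N : ∀ n' ∈ N, (x ∘ₗ a₂) n' = 0 := by
        intro n' hn'
        have hdc := hdecomp ⟨n', hn'⟩
        simp only [Submodule.coe_mk] at hdc
        rw [hdc, map_add, map_smul, map_smul, hbn₀₂, hbn₁₂, hb2, zero_smul,
          smul_zero, smul_zero, add_zero]
      have hbot₁ : N.map (x ∘ₗ a₁) = ⊥ := by
        rw [eq_bot_iff]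
        rintro y ⟨n', hn', rfl⟩
        simp [hb₁N n' hn']
      have hbot₂ : N.map (x ∘ₗ a₂) = ⊥ := by
        rw [eq_bot_iff]
        rintro y ⟨n', hn', rfl⟩
        simp [hb₂N n' hn']
      have : M = ⊥ := by rw [hM, hbot₁, hbot₂, sup_bot_eq]
      rw [this] at hM1
      simp [finrank_bot] at hM1
    have hker'' : a₁ n₁ = 0 → a₂ n₁ = 0 → n₁ = 0 := hkerN n₁ hn₁N
    have hcomm'' : ∀ w, a₁ ((x ∘ₗ a₂) w) = a₂ ((x ∘ₗ a₁) w) := by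
      intro w
      simpa using hc w
    have hW4 : 4 ≤ Module.finrank ℂ W₁ := by rw [hdim₁]; omega
    rcases hβor with hβ1 | hβ2
    · have hK' : Module.finrank ℂ ↥(LinearMap.ker (x ∘ₗ a₂) ⊓ LinearMap.ker (x ∘ₗ a₁)) ≤ 1 := by
        rw [inf_comm]
        exact hK ▸ hK1
      exact caseB_core a₂ a₁ (x ∘ₗ a₂) (x ∘ₗ a₁) l₂ l₁ m₂ m₁ β₂ β₁ n₀ n₁ hd₂ hd₁
        (fun w => (hrel w).symm) hβ1 (fun w => (hcomm'' w).symm)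
        (fun h2 h1 => hker'' h1 h2) hn₁0 hW4 hK'
    · exact caseB_core a₁ a₂ (x ∘ₗ a₁) (x ∘ₗ a₂) l₁ l₂ m₁ m₂ β₁ β₂ n₀ n₁ hd₁ hd₂
        hrel hβ2 hcomm'' hker'' hn₁0 hW4 (hK ▸ hK1)
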